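/- Let λ ∈ (0,1), α < 0, a, b ≥ 0 and δ > 0. Then M_α(a,b;λ) + δ ≤ M_α(a+δ, b+δ; λ) ≤ M_α(a,b;λ) + (min(1−λ, λ))^{1/α} · δ. (Estimate (3.11): the map s ↦ M_α(a+s, b+s; λ) has derivative between 1 and min(1−λ,λ)^{1/α}.) -/

import Mathlib

/-- The λ-weighted α-power mean of two nonnegative numbers. -/
noncomputable def powerMean (α lam a b : ℝ) : ℝ :=
  if 0 < a ∧ 0 < b then
    if α = 0 then a ^ (1 - lam) * b ^ lam
    else ((1 - lam) * a ^ α + lam * b ^ α) ^ (1 / α)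
  else 0

private lemma rpow_rpow_one_div {x α : ℝ} (hx : 0 ≤ x) (hα : α ≠ 0) : (x ^ α) ^ (1/α) = x := by
  rw [← Real.rpow_mul hx, mul_one_div_cancel hα, Real.rpow_one]

private lemma phi_concave (α δ : ℝ) (hα : α < 0) (hδ : 0 < δ) :
    ConcaveOn ℝ (Set.Ioi (0:ℝ)) (fun u : ℝ => (u ^ (1/α) + δ) ^ α) := by
  have h1α : (1:ℝ)/α < 0 := div_neg_of_pos_of_neg one_pos hα
  have hderiv : ∀ u ∈ Set.Ioi (0:ℝ), HasDerivAt (fun u : ℝ => (u ^ (1/α) + δ) ^ α)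
      ((u ^ (1/α) + δ) ^ (α-1) * u ^ (1/α - 1)) u := by
    intro u hu
    have hu0 : (0:ℝ) < u := hu
    have hv : 0 < u ^ (1/α) := Real.rpow_pos_of_pos hu0 _
    have h1 : HasDerivAt (fun u : ℝ => u ^ (1/α) + δ) (1/α * u ^ (1/α - 1)) u :=
      (Real.hasDerivAt_rpow_const (Or.inl hu0.ne')).add_const δ
    have h2 : HasDerivAt (fun v : ℝ => v ^ α) (α * (u ^ (1/α) + δ) ^ (α-1)) (u ^ (1/α) + δ) :=
      Real.hasDerivAt_rpow_const (Or.inl (by positivity))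
    have h3 := h2.comp u h1
    refine h3.congr_deriv ?_
    have hαα : α * (1/α) = 1 := mul_one_div_cancel hα.ne
    linear_combination hαα * ((u ^ (1/α) + δ) ^ (α-1) * u ^ (1/α - 1))
  have key : ∀ v : ℝ, 0 < v → (v+δ) ^ (α-1) * v ^ (1-α) = (1 + δ/v) ^ (α-1) := by
    intro v hv
    have h : 1 + δ/v = (v+δ)/v := by field_simp
    rw [h, Real.div_rpow (by positivity) hv.le, div_eq_mul_inv, ← Real.rpow_neg hv.le, neg_sub]
  refine AntitoneOn.concaveOn_of_deriv (convex_Ioi 0) ?_ ?_ ?_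
  · exact fun u hu => (hderiv u hu).continuousAt.continuousWithinAt
  · rw [interior_Ioi]
    exact fun u hu => (hderiv u hu).differentiableAt.differentiableWithinAt
  · rw [interior_Ioi]
    intro u₁ h1 u₂ h2 h12
    rw [(hderiv u₁ h1).deriv, (hderiv u₂ h2).deriv]
    have hu1 : (0:ℝ) < u₁ := h1
    have hu2 : (0:ℝ) < u₂ := h2
    have hv1 : 0 < u₁ ^ (1/α) := Real.rpow_pos_of_pos hu1 _
    have hv2 : 0 < u₂ ^ (1/α) := Real.rpow_pos_of_pos hu2 _
    have hv21 : u₂ ^ (1/α) ≤ u₁ ^ (1/α) := Real.rpow_le_rpow_of_nonpos hu1 h12 h1α.le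
    have e1 : u₁ ^ (1/α - 1) = (u₁ ^ (1/α)) ^ (1-α) := by
      rw [← Real.rpow_mul hu1.le]; ring_nf; rw [mul_inv_cancel₀ hα.ne]
    have e2 : u₂ ^ (1/α - 1) = (u₂ ^ (1/α)) ^ (1-α) := by
      rw [← Real.rpow_mul hu2.le]; ring_nf; rw [mul_inv_cancel₀ hα.ne]
    rw [e1, e2, key _ hv1, key _ hv2]
    have hd : δ / u₁ ^ (1/α) ≤ δ / u₂ ^ (1/α) := by
      apply div_le_div_of_nonneg_left hδ.le hv2 hv21
    exact Real.rpow_le_rpow_of_nonpos (by positivity) (by linarith) (by linarith)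

theorem powerMean_shift_estimate
    (lam : ℝ) (hlam : lam ∈ Set.Ioo (0 : ℝ) 1) (α : ℝ) (hα : α < 0)
    (a b : ℝ) (ha : 0 ≤ a) (hb : 0 ≤ b) (δ : ℝ) (hδ : 0 < δ) :
    powerMean α lam a b + δ ≤ powerMean α lam (a + δ) (b + δ) ∧
    powerMean α lam (a + δ) (b + δ) ≤
      powerMean α lam a b + min (1 - lam) lam ^ (1 / α) * δ := by
  obtain ⟨hl0, hl1⟩ := hlam
  have hw0 : (0:ℝ) < 1 - lam := by linarith
  have hαne : α ≠ 0 := hα.ne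
  have h1α : (1:ℝ)/α < 0 := div_neg_of_pos_of_neg one_pos hα
  have hm0 : 0 < min (1-lam) lam := lt_min hw0 hl0
  have hc0 : 0 < min (1-lam) lam ^ (1/α) := Real.rpow_pos_of_pos hm0 _
  have hA : 0 < a + δ := by linarith
  have hB : 0 < b + δ := by linarith
  have hPδ : powerMean α lam (a+δ) (b+δ)
      = ((1-lam)*(a+δ)^α + lam*(b+δ)^α)^(1/α) := by
    rw [powerMean, if_pos ⟨hA,hB⟩, if_neg hαne]
  have hSδ0 : 0 < (1-lam)*(a+δ)^α + lam*(b+δ)^α := by positivity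
  by_cases hab : 0 < a ∧ 0 < b
  · obtain ⟨ha0, hb0⟩ := hab
    have hP0 : powerMean α lam a b = ((1-lam)*a^α + lam*b^α)^(1/α) := by
      rw [powerMean, if_pos ⟨ha0,hb0⟩, if_neg hαne]
    have hS00 : 0 < (1-lam)*a^α + lam*b^α := by positivity
    have hM0 : 0 < ((1-lam)*a^α + lam*b^α)^(1/α) := Real.rpow_pos_of_pos hS00 _
    have hMα : (((1-lam)*a^α + lam*b^α)^(1/α))^α = (1-lam)*a^α + lam*b^α := by
      rw [← Real.rpow_mul hS00.le, one_div, inv_mul_cancel₀ hαne, Real.rpow_one]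
    constructor
    · -- lower bound via concavity (Jensen)
      have hconc := (phi_concave α δ hα hδ).2 (Set.mem_Ioi.mpr (Real.rpow_pos_of_pos ha0 α))
        (Set.mem_Ioi.mpr (Real.rpow_pos_of_pos hb0 α)) hw0.le hl0.le (by ring)
      simp only [smul_eq_mul] at hconc
      rw [rpow_rpow_one_div ha hαne, rpow_rpow_one_div hb hαne] at hconc
      -- hconc : (1-lam)*(a+δ)^α + lam*(b+δ)^α ≤ (((1-lam)*a^α+lam*b^α)^(1/α)+δ)^α
      rw [hP0, hPδ]
      have h2 := Real.rpow_le_rpow_of_nonpos hSδ0 hconc h1α.le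
      rwa [rpow_rpow_one_div (by positivity) hαne] at h2
    · -- upper bound, direct scaling argument
      set c := min (1-lam) lam ^ (1/α) with hcdef
      set M := ((1-lam)*a^α + lam*b^α)^(1/α) with hMdef
      have hMa : M ≤ c * a := by
        have h1 : (1-lam)*a^α ≤ (1-lam)*a^α + lam*b^α := by
          have := mul_pos hl0 (Real.rpow_pos_of_pos hb0 α); linarith
        calc M ≤ ((1-lam)*a^α)^(1/α) :=
              Real.rpow_le_rpow_of_nonpos (by positivity) h1 h1α.le
          _ = (1-lam)^(1/α) * a := by
              rw [Real.mul_rpow hw0.le (by positivity), rpow_rpow_one_div ha hαne]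
          _ ≤ c * a := by
              have := Real.rpow_le_rpow_of_nonpos hm0 (min_le_left (1-lam) lam) h1α.le
              exact mul_le_mul_of_nonneg_right this ha
      have hMb : M ≤ c * b := by
        have h1 : lam*b^α ≤ (1-lam)*a^α + lam*b^α := by
          have := mul_pos hw0 (Real.rpow_pos_of_pos ha0 α); linarith
        calc M ≤ (lam*b^α)^(1/α) :=
              Real.rpow_le_rpow_of_nonpos (by positivity) h1 h1α.le
          _ = lam^(1/α) * b := by
              rw [Real.mul_rpow hl0.le (by positivity), rpow_rpow_one_div hb hαne]
          _ ≤ c * b := by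
              have := Real.rpow_le_rpow_of_nonpos hm0 (min_le_right (1-lam) lam) h1α.le
              exact mul_le_mul_of_nonneg_right this hb
      have hterm : ∀ t : ℝ, 0 ≤ t → M ≤ c * t →
          ((M + c*δ)/M)^α * t^α ≤ (t+δ)^α := by
        intro t ht hMt
        have ht0 : 0 < t := by
          rcases ht.lt_or_eq with h | h
          · exact h
          · exfalso; rw [← h] at hMt; simp at hMt; nlinarith
        have hle : t + δ ≤ (M + c*δ)/M * t := by
          rw [div_mul_eq_mul_div, le_div_iff₀ hM0]
          nlinarith
        have := Real.rpow_le_rpow_of_nonpos (by positivity) hle hα.le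
        rwa [Real.mul_rpow (by positivity) ht] at this
      have hsum : (M + c*δ)^α ≤ (1-lam)*(a+δ)^α + lam*(b+δ)^α := by
        have h1 := hterm a ha hMa
        have h2 := hterm b hb hMb
        have hK : ((M + c*δ)/M)^α * ((1-lam)*a^α + lam*b^α) = (M + c*δ)^α := by
          rw [← hMα]
          rw [← Real.mul_rpow (by positivity) hM0.le, div_mul_cancel₀ _ hM0.ne']
        nlinarith [mul_le_mul_of_nonneg_left h1 hw0.le, mul_le_mul_of_nonneg_left h2 hl0.le]
      rw [hP0, hPδ]
      have h2 := Real.rpow_le_rpow_of_nonpos (by positivity) hsum h1α.le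
      rwa [rpow_rpow_one_div (by positivity) hαne] at h2
  · have hP0 : powerMean α lam a b = 0 := by rw [powerMean, if_neg hab]
    have hdale : (a+δ)^α ≤ δ^α := Real.rpow_le_rpow_of_nonpos hδ (by linarith) hα.le
    have hdble : (b+δ)^α ≤ δ^α := Real.rpow_le_rpow_of_nonpos hδ (by linarith) hα.le
    have hd0 : 0 < δ^α := Real.rpow_pos_of_pos hδ α
    constructor
    · rw [hP0, hPδ, zero_add]
      have hle : (1-lam)*(a+δ)^α + lam*(b+δ)^α ≤ δ^α := by nlinarith
      have h2 := Real.rpow_le_rpow_of_nonpos hSδ0 hle h1α.le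
      rwa [rpow_rpow_one_div hδ.le hαne] at h2
    · rw [hP0, hPδ, zero_add]
      have hab' : a = 0 ∨ b = 0 := by
        by_contra h
        push_neg at h
        exact hab ⟨ha.lt_of_ne' h.1, hb.lt_of_ne' h.2⟩
      have hkey : min (1-lam) lam * δ^α ≤ (1-lam)*(a+δ)^α + lam*(b+δ)^α := by
        rcases hab' with h | h
        · subst h
          have hm : min (1-lam) lam ≤ 1-lam := min_le_left _ _
          have : (0:ℝ) + δ = δ := by ring
          rw [this]
          nlinarith [mul_pos hl0 (Real.rpow_pos_of_pos hB α)]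
        · subst h
          have hm : min (1-lam) lam ≤ lam := min_le_right _ _
          have : (0:ℝ) + δ = δ := by ring
          rw [this]
          nlinarith [mul_pos hw0 (Real.rpow_pos_of_pos hA α)]
      have h2 := Real.rpow_le_rpow_of_nonpos (by positivity) hkey h1α.le
      rwa [Real.mul_rpow hm0.le hd0.le, rpow_rpow_one_div hδ.le hαne] at h2
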